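/- A long virtual knot K is virtually slice if and only if its closure K̄ is virtually slice. -/

import Mathlib

/- ----------------------------------------------------------------------------
A combinatorial model of virtual link diagrams via Gauss codes.

A virtual link diagram is faithfully encoded by the Gauss codes of its
components: each passage through a classical crossing is recorded by a symbol
carrying the crossing label, an over/under bit, and the sign of the crossing.
Virtual crossings are artifacts of drawing a Gauss code in the plane and are
invisible in this encoding (by the detour move).  Generalised Reidemeister
equivalence of virtual link diagrams corresponds exactly to the moves `RMove`
below, where for the third Reidemeister move the admissible configurations of
over/under bits, signs, and orders along the three strands are those realised by
a planar triangle picture.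

Long virtual knots are encoded by marking the point at infinity of the long
component with the extra symbol `star`, which no move may touch or rotate past.

Cobordisms of diagrams follow Kauffman: movies of generalised Reidemeister
moves, saddle moves (which merge two components or split one, compatibly with
orientations), births and deaths of crossingless circles.  A concordance is a
cobordism in which the number of saddles equals the number of births plus the
number of deaths.
---------------------------------------------------------------------------- -/

namespace VKnot

/-- A symbol of a Gauss code: a passage through a classical crossing (crossing
label, over/under bit, sign bit with `true` = positive) or the marker `star` for
the point at infinity of a long component. -/
inductive Sym
  | cross (id : ℕ) (isOver : Bool) (sign : Bool)
  | star
deriving DecidableEq, BEq, Repr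

/-- One component of a virtual link diagram: its Gauss word (a cyclic word,
recorded as a list; cyclic rotation is one of the moves below). -/
abbrev Comp := List Sym

/-- A virtual link diagram: the list of Gauss words of its components. -/
abbrev VLD := List Comp

/-- The crossing labels occurring in a diagram. -/
def ids (D : VLD) : List ℕ :=
  D.flatten.filterMap (fun s => match s with | .cross i _ _ => some i | .star => none)

/-- Relabelling the crossings of a diagram. -/
def relabel (f : ℕ → ℕ) (D : VLD) : VLD :=
  D.map (List.map (fun s => match s with
    | .cross i b c => .cross (f i) b c
    | .star => .star))

/-- Well-formedness of a diagram: each crossing label occurs exactly twice, once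
as an over-passage and once as an under-passage, both with the same sign. -/
def WF (D : VLD) : Prop :=
  ∀ i : ℕ,
    (D.flatten.filter (fun s => match s with | .cross j _ _ => j == i | .star => false)) = []
    ∨ ∃ s : Bool,
      (D.flatten.filter (fun s => match s with | .cross j _ _ => j == i | .star => false)).Perm
        [Sym.cross i true s, Sym.cross i false s]

/-! ### The third Reidemeister move

The local picture of a third Reidemeister move consists of three strands
pairwise crossing in a triangle, one strand passing over the other two, one
under the other two.  In the Gauss code the move swaps two adjacent symbols on
each of the three strands.  Which over/under bits, signs, and orders along the
strands can occur is dictated by planarity of the local picture; the equations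
below are exactly the realisability conditions of a planar triangle
(`s₁₂ = h₁₂δ₁δ₂`, `s₁₃ = -h₁₃δ₁δ₃`, `s₂₃ = -h₂₃δ₂δ₃` in `±1` notation, with the
height tournament transitive).  Here for booleans `==` plays the role of the
product of signs and `!` of negation. -/

/-- The labelled form of an admissible Reidemeister III configuration.
`t1 t2 t3` are the ordered pairs of adjacent symbols on the three strands;
crossing `p` joins strands 1,2; crossing `q` joins strands 1,3; crossing `r`
joins strands 2,3.  `h₁₂ = true` means strand 1 passes over strand 2, etc.;
`δ₁` records whether strand 1 meets `p` before `q`, `δ₂` whether strand 2 meets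
`p` before `r`, `δ₃` whether strand 3 meets `r` before `q`. -/
def R3Triple (t1 t2 t3 : Sym × Sym) : Prop :=
  ∃ (p q r : ℕ) (h12 h13 h23 sp sq sr : Bool) (δ1 δ2 δ3 : Bool),
    p ≠ q ∧ p ≠ r ∧ q ≠ r ∧
    t1 = (if δ1 then ((Sym.cross p h12 sp, Sym.cross q h13 sq) : Sym × Sym)
          else (Sym.cross q h13 sq, Sym.cross p h12 sp)) ∧
    t2 = (if δ2 then ((Sym.cross p (!h12) sp, Sym.cross r h23 sr) : Sym × Sym)
          else (Sym.cross r h23 sr, Sym.cross p (!h12) sp)) ∧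
    t3 = (if δ3 then ((Sym.cross r (!h23) sr, Sym.cross q (!h13) sq) : Sym × Sym)
          else (Sym.cross q (!h13) sq, Sym.cross r (!h23) sr)) ∧
    -- the height tournament is transitive (some strand is on top, some at the bottom):
    ¬((h12 = true ∧ h23 = true ∧ h13 = false) ∨ (h12 = false ∧ h23 = false ∧ h13 = true)) ∧
    -- planarity of the triangle:
    sp = (h12 == (δ1 == δ2)) ∧
    sq = !(h13 == (δ1 == δ3)) ∧
    sr = !(h23 == (δ2 == δ3))

/-- An admissible Reidemeister III configuration: some labelling of the three
strand segments satisfies `R3Triple`. -/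
def R3Legal (u1 u2 u3 : Sym × Sym) : Prop :=
  ∃ t1 t2 t3 : Sym × Sym, [t1, t2, t3].Perm [u1, u2, u3] ∧ R3Triple t1 t2 t3

/-- Generalised Reidemeister moves on Gauss codes of virtual link diagrams (one
direction each; the symmetric closure is taken in `LStep`).

* `perm`   : reordering the components;
* `rot`    : cyclic rotation of the basepoint of a (round) component;
* `relabel`: renaming the crossing labels;
* `r1`     : removing a kink (all four variants);
* `r2_same`, `r2_diff` : a second Reidemeister move, the two strands lying on one
  or on two components (both the direct and the reversed variant, with opposite
  signs);
* `r3_*`   : a third Reidemeister move, the three strands lying on one, two or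
  three components, in an admissible configuration.

The purely virtual and mixed moves are invisible in the Gauss code. -/
inductive RMove : VLD → VLD → Prop
  | perm {D D' : VLD} (h : D.Perm D') : RMove D D'
  | rot (a : Sym) (w : Comp) (D : VLD) (h : Sym.star ∉ a :: w) :
      RMove ((a :: w) :: D) ((w ++ [a]) :: D)
  | relabel (f : ℕ → ℕ) (hf : Function.Injective f) (D : VLD) :
      RMove D (relabel f D)
  | r1 (c : ℕ) (b b' s : Bool) (hb : b ≠ b') (x y : Comp) (D : VLD)
      (hfresh : c ∉ ids ((x ++ y) :: D)) :
      RMove ((x ++ [.cross c b s, .cross c b' s] ++ y) :: D) ((x ++ y) :: D)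
  | r2_same (c d : ℕ) (b s : Bool) (P : Comp)
      (hP : P = [Sym.cross c (!b) s, Sym.cross d (!b) (!s)] ∨
            P = [Sym.cross d (!b) (!s), Sym.cross c (!b) s])
      (hcd : c ≠ d) (x y z : Comp) (D : VLD)
      (hfc : c ∉ ids ((x ++ y ++ z) :: D)) (hfd : d ∉ ids ((x ++ y ++ z) :: D)) :
      RMove ((x ++ [Sym.cross c b s, Sym.cross d b (!s)] ++ y ++ P ++ z) :: D)
            ((x ++ y ++ z) :: D)
  | r2_diff (c d : ℕ) (b s : Bool) (P : Comp)
      (hP : P = [Sym.cross c (!b) s, Sym.cross d (!b) (!s)] ∨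
            P = [Sym.cross d (!b) (!s), Sym.cross c (!b) s])
      (hcd : c ≠ d) (x y u v : Comp) (D : VLD)
      (hfc : c ∉ ids ((x ++ y) :: (u ++ v) :: D)) (hfd : d ∉ ids ((x ++ y) :: (u ++ v) :: D)) :
      RMove ((x ++ [Sym.cross c b s, Sym.cross d b (!s)] ++ y) :: (u ++ P ++ v) :: D)
            ((x ++ y) :: (u ++ v) :: D)
  | r3_1 (a1 a2 b1 b2 c1 c2 : Sym) (h : R3Legal (a1, a2) (b1, b2) (c1, c2))
      (x y z w : Comp) (D : VLD) :
      RMove ((x ++ [a1, a2] ++ y ++ [b1, b2] ++ z ++ [c1, c2] ++ w) :: D)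
            ((x ++ [a2, a1] ++ y ++ [b2, b1] ++ z ++ [c2, c1] ++ w) :: D)
  | r3_2 (a1 a2 b1 b2 c1 c2 : Sym) (h : R3Legal (a1, a2) (b1, b2) (c1, c2))
      (x y z u v : Comp) (D : VLD) :
      RMove ((x ++ [a1, a2] ++ y ++ [b1, b2] ++ z) :: (u ++ [c1, c2] ++ v) :: D)
            ((x ++ [a2, a1] ++ y ++ [b2, b1] ++ z) :: (u ++ [c2, c1] ++ v) :: D)
  | r3_3 (a1 a2 b1 b2 c1 c2 : Sym) (h : R3Legal (a1, a2) (b1, b2) (c1, c2))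
      (x y u v t w : Comp) (D : VLD) :
      RMove ((x ++ [a1, a2] ++ y) :: (u ++ [b1, b2] ++ v) :: (t ++ [c1, c2] ++ w) :: D)
            ((x ++ [a2, a1] ++ y) :: (u ++ [b2, b1] ++ v) :: (t ++ [c2, c1] ++ w) :: D)

/-- The kinds of elementary steps in a cobordism movie. -/
inductive Lab
  | rmove | saddle | birth | death
deriving DecidableEq, BEq, Repr

/-- A labelled elementary step between virtual link diagrams: a generalised
Reidemeister move (in either direction), an (orientation-compatible) saddle move
merging two components or splitting one, the birth of a crossingless circle, or
the death of a crossingless circle. -/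
inductive LStep : Lab → VLD → VLD → Prop
  | rmoveF {D D' : VLD} : RMove D D' → LStep .rmove D D'
  | rmoveB {D D' : VLD} : RMove D' D → LStep .rmove D D'
  | saddle_merge (x y z : Comp) (D : VLD) (h : Sym.star ∉ y) :
      LStep .saddle ((x ++ z) :: y :: D) ((x ++ y ++ z) :: D)
  | saddle_split (x y z : Comp) (D : VLD) (h : Sym.star ∉ y) :
      LStep .saddle ((x ++ y ++ z) :: D) ((x ++ z) :: y :: D)
  | birth (D : VLD) : LStep .birth D ([] :: D)
  | death (D : VLD) : LStep .death ([] :: D) D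

/-- `IsMovie D m D'`: the movie `m` (a list of labelled steps with their
resulting diagrams) transforms `D` into `D'`. -/
def IsMovie : VLD → List (Lab × VLD) → VLD → Prop
  | D, [], D' => D = D'
  | D, (l, E) :: m, D' => LStep l D E ∧ IsMovie E m D'

/-- The number of steps of a given kind in a movie. -/
def countLab (l : Lab) (m : List (Lab × VLD)) : ℕ := (m.filter (fun p => p.1 == l)).length

/-- Concordance of virtual link diagrams (Kauffman): a movie of generalised
Reidemeister moves, saddles, births and deaths in which the number of saddle
moves equals the total number of births and deaths (so that the trace surface
consists of annuli). -/
def Concordant (D D' : VLD) : Prop :=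
  ∃ m : List (Lab × VLD), IsMovie D m D' ∧
    countLab .saddle m = countLab .birth m + countLab .death m

/-- A long virtual knot is recorded by the Gauss word of its long component,
read from `-∞` to `+∞`; as a diagram it is the component `star :: w` (with the
point at infinity marked by `star`), and further round components may appear
during cobordisms. -/
def longDiagram (w : List Sym) : VLD := [Sym.star :: w]

/-- Virtual concordance of long virtual knots. -/
def LongConcordant (w w' : List Sym) : Prop :=
  Concordant (longDiagram w) (longDiagram w')

/-- A long virtual knot is virtually slice if it is virtually concordant to the
long unknot (the empty Gauss word). -/
def LongSlice (w : List Sym) : Prop := LongConcordant w []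

/-- The closure of a long virtual knot: the same Gauss word, read as the cyclic
word of a round virtual knot diagram. -/
def closure (w : List Sym) : VLD := [w]

/-- A round virtual knot diagram is virtually slice if it is virtually
concordant to the unknot. -/
def RoundSlice (D : VLD) : Prop := Concordant D [([] : Comp)]


/-! ### Auxiliary machinery for the proof of Lemma 3.3 -/

/-- Delete the `star` marker from a Gauss word. -/
def noStar (c : Comp) : Comp := c.filter (fun s => decide (s ≠ Sym.star))

/-- Delete the `star` marker from a diagram. -/
def delStar (D : VLD) : VLD := D.map noStar

@[simp] lemma noStar_nil : noStar [] = [] := rfl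

@[simp] lemma noStar_cons_cross (i : ℕ) (b s : Bool) (l : Comp) :
    noStar (Sym.cross i b s :: l) = Sym.cross i b s :: noStar l := by
  simp [noStar]

@[simp] lemma noStar_cons_star (l : Comp) :
    noStar (Sym.star :: l) = noStar l := by
  simp [noStar]

@[simp] lemma noStar_append (l l' : Comp) :
    noStar (l ++ l') = noStar l ++ noStar l' := by
  simp [noStar]

@[simp] lemma star_not_mem_noStar (l : Comp) : Sym.star ∉ noStar l := by
  simp [noStar]

lemma noStar_eq_self {l : Comp} (h : Sym.star ∉ l) : noStar l = l := by
  induction l with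
  | nil => rfl
  | cons a l ih =>
    cases a with
    | cross i b s => simp [ih (fun hm => h (List.mem_cons_of_mem _ hm))]
    | star => exact absurd List.mem_cons_self h

@[simp] lemma delStar_nil : delStar [] = [] := rfl

@[simp] lemma delStar_cons (c : Comp) (D : VLD) :
    delStar (c :: D) = noStar c :: delStar D := rfl

lemma noStar_cons_of_cross {a : Sym} (h : a ≠ Sym.star) (l : Comp) :
    noStar (a :: l) = a :: noStar l := by
  cases a with
  | cross i b s => simp
  | star => exact absurd rfl h

lemma ids_cons (c : Comp) (D : VLD) :
    ids (c :: D) =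
      (c.filterMap (fun s => match s with | .cross i _ _ => some i | .star => none)) ++ ids D := by
  simp [ids]

lemma idsc_noStar (c : Comp) :
    (noStar c).filterMap (fun s => match s with | .cross i _ _ => some i | .star => none)
      = c.filterMap (fun s => match s with | .cross i _ _ => some i | .star => none) := by
  induction c with
  | nil => rfl
  | cons a l ih =>
    cases a with
    | cross i b s => simpa using ih
    | star => simpa using ih

lemma ids_delStar (D : VLD) : ids (delStar D) = ids D := by
  induction D with
  | nil => rfl
  | cons c D ih => rw [delStar_cons, ids_cons, ids_cons, idsc_noStar, ih]

lemma noStar_map_relabel (f : ℕ → ℕ) (c : Comp) :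
    noStar (c.map (fun s => match s with
      | Sym.cross i b cc => Sym.cross (f i) b cc
      | Sym.star => Sym.star)) =
    (noStar c).map (fun s => match s with
      | Sym.cross i b cc => Sym.cross (f i) b cc
      | Sym.star => Sym.star) := by
  induction c with
  | nil => rfl
  | cons a l ih =>
    cases a with
    | cross i b s => simpa using ih
    | star => simpa using ih

lemma delStar_relabel (f : ℕ → ℕ) (D : VLD) :
    delStar (relabel f D) = relabel f (delStar D) := by
  unfold relabel delStar
  rw [List.map_map, List.map_map]
  refine List.map_congr_left (fun c _ => ?_)
  exact noStar_map_relabel f c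

lemma R3Triple.noStarPairs {t1 t2 t3 : Sym × Sym} (h : R3Triple t1 t2 t3) :
    ∀ u ∈ [t1, t2, t3], u.1 ≠ Sym.star ∧ u.2 ≠ Sym.star := by
  obtain ⟨p, q, r, h12, h13, h23, sp, sq, sr, δ1, δ2, δ3, -, -, -, e1, e2, e3, -⟩ := h
  intro u hu
  simp only [List.mem_cons, List.not_mem_nil, or_false] at hu
  rcases hu with rfl | rfl | rfl
  · rw [e1]; cases δ1 <;> simp
  · rw [e2]; cases δ2 <;> simp
  · rw [e3]; cases δ3 <;> simp

lemma R3Legal.noStarPairs {u1 u2 u3 : Sym × Sym} (h : R3Legal u1 u2 u3) :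
    ∀ u ∈ [u1, u2, u3], u.1 ≠ Sym.star ∧ u.2 ≠ Sym.star := by
  obtain ⟨t1, t2, t3, hperm, ht⟩ := h
  intro u hu
  exact ht.noStarPairs u (hperm.mem_iff.mpr hu)

lemma delStar_rmove {D D' : VLD} (h : RMove D D') : RMove (delStar D) (delStar D') := by
  cases h with
  | perm h => exact RMove.perm (h.map _)
  | rot a w D h =>
    have ha : a ≠ Sym.star := by
      rintro rfl; exact h List.mem_cons_self
    rw [delStar_cons, delStar_cons, noStar_cons_of_cross ha, noStar_append]
    have : noStar [a] = [a] := by rw [noStar_cons_of_cross ha, noStar_nil]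
    rw [this]
    refine RMove.rot a (noStar w) (delStar D) ?_
    intro hm
    rcases List.mem_cons.mp hm with h1 | h1
    · exact ha h1.symm
    · exact star_not_mem_noStar w h1
  | relabel f hf D =>
    rw [delStar_relabel]
    exact RMove.relabel f hf (delStar D)
  | r1 c b b' s hb x y D hfresh =>
    have e : delStar (((x ++ y) : Comp) :: D) = (noStar x ++ noStar y) :: delStar D := by simp
    have hf : c ∉ ids ((noStar x ++ noStar y) :: delStar D) := by
      rw [← e, ids_delStar]; exact hfresh
    have h1 : delStar ((x ++ [Sym.cross c b s, Sym.cross c b' s] ++ y) :: D)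
        = (noStar x ++ [Sym.cross c b s, Sym.cross c b' s] ++ noStar y) :: delStar D := by simp
    rw [h1, e]
    exact RMove.r1 c b b' s hb (noStar x) (noStar y) (delStar D) hf
  | r2_same c d b s P hP hcd x y z D hfc hfd =>
    have e : delStar (((x ++ y ++ z) : Comp) :: D)
        = (noStar x ++ noStar y ++ noStar z) :: delStar D := by simp
    have hfc' : c ∉ ids ((noStar x ++ noStar y ++ noStar z) :: delStar D) := by
      rw [← e, ids_delStar]; exact hfc
    have hfd' : d ∉ ids ((noStar x ++ noStar y ++ noStar z) :: delStar D) := by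
      rw [← e, ids_delStar]; exact hfd
    rcases hP with rfl | rfl
    · have h1 : delStar ((x ++ [Sym.cross c b s, Sym.cross d b (!s)] ++ y ++
            [Sym.cross c (!b) s, Sym.cross d (!b) (!s)] ++ z) :: D)
          = (noStar x ++ [Sym.cross c b s, Sym.cross d b (!s)] ++ noStar y ++
            [Sym.cross c (!b) s, Sym.cross d (!b) (!s)] ++ noStar z) :: delStar D := by simp
      rw [h1, e]
      exact RMove.r2_same c d b s _ (Or.inl rfl) hcd (noStar x) (noStar y) (noStar z)
        (delStar D) hfc' hfd'
    · have h1 : delStar ((x ++ [Sym.cross c b s, Sym.cross d b (!s)] ++ y ++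
            [Sym.cross d (!b) (!s), Sym.cross c (!b) s] ++ z) :: D)
          = (noStar x ++ [Sym.cross c b s, Sym.cross d b (!s)] ++ noStar y ++
            [Sym.cross d (!b) (!s), Sym.cross c (!b) s] ++ noStar z) :: delStar D := by simp
      rw [h1, e]
      exact RMove.r2_same c d b s _ (Or.inr rfl) hcd (noStar x) (noStar y) (noStar z)
        (delStar D) hfc' hfd'
  | r2_diff c d b s P hP hcd x y u v D hfc hfd =>
    have e : delStar (((x ++ y) : Comp) :: ((u ++ v) : Comp) :: D)
        = (noStar x ++ noStar y) :: (noStar u ++ noStar v) :: delStar D := by simp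
    have hfc' : c ∉ ids ((noStar x ++ noStar y) :: (noStar u ++ noStar v) :: delStar D) := by
      rw [← e, ids_delStar]; exact hfc
    have hfd' : d ∉ ids ((noStar x ++ noStar y) :: (noStar u ++ noStar v) :: delStar D) := by
      rw [← e, ids_delStar]; exact hfd
    rcases hP with rfl | rfl
    · have h1 : delStar ((x ++ [Sym.cross c b s, Sym.cross d b (!s)] ++ y) ::
            (u ++ [Sym.cross c (!b) s, Sym.cross d (!b) (!s)] ++ v) :: D)
          = (noStar x ++ [Sym.cross c b s, Sym.cross d b (!s)] ++ noStar y)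
              :: (noStar u ++ [Sym.cross c (!b) s, Sym.cross d (!b) (!s)] ++ noStar v)
              :: delStar D := by simp
      rw [h1, e]
      exact RMove.r2_diff c d b s _ (Or.inl rfl) hcd (noStar x) (noStar y) (noStar u)
        (noStar v) (delStar D) hfc' hfd'
    · have h1 : delStar ((x ++ [Sym.cross c b s, Sym.cross d b (!s)] ++ y) ::
            (u ++ [Sym.cross d (!b) (!s), Sym.cross c (!b) s] ++ v) :: D)
          = (noStar x ++ [Sym.cross c b s, Sym.cross d b (!s)] ++ noStar y)
              :: (noStar u ++ [Sym.cross d (!b) (!s), Sym.cross c (!b) s] ++ noStar v)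
              :: delStar D := by simp
      rw [h1, e]
      exact RMove.r2_diff c d b s _ (Or.inr rfl) hcd (noStar x) (noStar y) (noStar u)
        (noStar v) (delStar D) hfc' hfd'
  | r3_1 a1 a2 b1 b2 c1 c2 h x y z wc D =>
    obtain ⟨ha1, ha2⟩ := h.noStarPairs (a1, a2) (by simp)
    obtain ⟨hb1, hb2⟩ := h.noStarPairs (b1, b2) (by simp)
    obtain ⟨hc1, hc2⟩ := h.noStarPairs (c1, c2) (by simp)
    replace ha1 : a1 ≠ Sym.star := ha1
    replace ha2 : a2 ≠ Sym.star := ha2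
    replace hb1 : b1 ≠ Sym.star := hb1
    replace hb2 : b2 ≠ Sym.star := hb2
    replace hc1 : c1 ≠ Sym.star := hc1
    replace hc2 : c2 ≠ Sym.star := hc2
    have e1 : delStar ((x ++ [a1, a2] ++ y ++ [b1, b2] ++ z ++ [c1, c2] ++ wc) :: D)
        = (noStar x ++ [a1, a2] ++ noStar y ++ [b1, b2] ++ noStar z ++ [c1, c2] ++ noStar wc)
            :: delStar D := by
      simp [noStar_cons_of_cross ha1, noStar_cons_of_cross ha2, noStar_cons_of_cross hb1, noStar_cons_of_cross hb2, noStar_cons_of_cross hc1, noStar_cons_of_cross hc2]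
    have e2 : delStar ((x ++ [a2, a1] ++ y ++ [b2, b1] ++ z ++ [c2, c1] ++ wc) :: D)
        = (noStar x ++ [a2, a1] ++ noStar y ++ [b2, b1] ++ noStar z ++ [c2, c1] ++ noStar wc)
            :: delStar D := by
      simp [noStar_cons_of_cross ha1, noStar_cons_of_cross ha2, noStar_cons_of_cross hb1, noStar_cons_of_cross hb2, noStar_cons_of_cross hc1, noStar_cons_of_cross hc2]
    rw [e1, e2]
    exact RMove.r3_1 a1 a2 b1 b2 c1 c2 h (noStar x) (noStar y) (noStar z) (noStar wc) (delStar D)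
  | r3_2 a1 a2 b1 b2 c1 c2 h x y z u v D =>
    obtain ⟨ha1, ha2⟩ := h.noStarPairs (a1, a2) (by simp)
    obtain ⟨hb1, hb2⟩ := h.noStarPairs (b1, b2) (by simp)
    obtain ⟨hc1, hc2⟩ := h.noStarPairs (c1, c2) (by simp)
    replace ha1 : a1 ≠ Sym.star := ha1
    replace ha2 : a2 ≠ Sym.star := ha2
    replace hb1 : b1 ≠ Sym.star := hb1
    replace hb2 : b2 ≠ Sym.star := hb2
    replace hc1 : c1 ≠ Sym.star := hc1
    replace hc2 : c2 ≠ Sym.star := hc2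
    have e1 : delStar ((x ++ [a1, a2] ++ y ++ [b1, b2] ++ z) :: (u ++ [c1, c2] ++ v) :: D)
        = (noStar x ++ [a1, a2] ++ noStar y ++ [b1, b2] ++ noStar z)
            :: (noStar u ++ [c1, c2] ++ noStar v) :: delStar D := by
      simp [noStar_cons_of_cross ha1, noStar_cons_of_cross ha2, noStar_cons_of_cross hb1, noStar_cons_of_cross hb2, noStar_cons_of_cross hc1, noStar_cons_of_cross hc2]
    have e2 : delStar ((x ++ [a2, a1] ++ y ++ [b2, b1] ++ z) :: (u ++ [c2, c1] ++ v) :: D)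
        = (noStar x ++ [a2, a1] ++ noStar y ++ [b2, b1] ++ noStar z)
            :: (noStar u ++ [c2, c1] ++ noStar v) :: delStar D := by
      simp [noStar_cons_of_cross ha1, noStar_cons_of_cross ha2, noStar_cons_of_cross hb1, noStar_cons_of_cross hb2, noStar_cons_of_cross hc1, noStar_cons_of_cross hc2]
    rw [e1, e2]
    exact RMove.r3_2 a1 a2 b1 b2 c1 c2 h (noStar x) (noStar y) (noStar z) (noStar u) (noStar v)
      (delStar D)
  | r3_3 a1 a2 b1 b2 c1 c2 h x y u v t wc D =>
    obtain ⟨ha1, ha2⟩ := h.noStarPairs (a1, a2) (by simp)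
    obtain ⟨hb1, hb2⟩ := h.noStarPairs (b1, b2) (by simp)
    obtain ⟨hc1, hc2⟩ := h.noStarPairs (c1, c2) (by simp)
    replace ha1 : a1 ≠ Sym.star := ha1
    replace ha2 : a2 ≠ Sym.star := ha2
    replace hb1 : b1 ≠ Sym.star := hb1
    replace hb2 : b2 ≠ Sym.star := hb2
    replace hc1 : c1 ≠ Sym.star := hc1
    replace hc2 : c2 ≠ Sym.star := hc2
    have e1 : delStar ((x ++ [a1, a2] ++ y) :: (u ++ [b1, b2] ++ v) :: (t ++ [c1, c2] ++ wc) :: D)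
        = (noStar x ++ [a1, a2] ++ noStar y) :: (noStar u ++ [b1, b2] ++ noStar v)
            :: (noStar t ++ [c1, c2] ++ noStar wc) :: delStar D := by
      simp [noStar_cons_of_cross ha1, noStar_cons_of_cross ha2, noStar_cons_of_cross hb1, noStar_cons_of_cross hb2, noStar_cons_of_cross hc1, noStar_cons_of_cross hc2]
    have e2 : delStar ((x ++ [a2, a1] ++ y) :: (u ++ [b2, b1] ++ v) :: (t ++ [c2, c1] ++ wc) :: D)
        = (noStar x ++ [a2, a1] ++ noStar y) :: (noStar u ++ [b2, b1] ++ noStar v)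
            :: (noStar t ++ [c2, c1] ++ noStar wc) :: delStar D := by
      simp [noStar_cons_of_cross ha1, noStar_cons_of_cross ha2, noStar_cons_of_cross hb1, noStar_cons_of_cross hb2, noStar_cons_of_cross hc1, noStar_cons_of_cross hc2]
    rw [e1, e2]
    exact RMove.r3_3 a1 a2 b1 b2 c1 c2 h (noStar x) (noStar y) (noStar u) (noStar v) (noStar t)
      (noStar wc) (delStar D)

lemma delStar_lstep {l : Lab} {D D' : VLD} (h : LStep l D D') :
    LStep l (delStar D) (delStar D') := by
  cases h with
  | rmoveF h => exact LStep.rmoveF (delStar_rmove h)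
  | rmoveB h => exact LStep.rmoveB (delStar_rmove h)
  | saddle_merge x y z D h =>
    have e1 : delStar (((x ++ z) : Comp) :: y :: D)
        = (noStar x ++ noStar z) :: noStar y :: delStar D := by simp
    have e2 : delStar (((x ++ y ++ z) : Comp) :: D)
        = (noStar x ++ noStar y ++ noStar z) :: delStar D := by simp
    rw [e1, e2]
    exact LStep.saddle_merge (noStar x) (noStar y) (noStar z) (delStar D)
      (star_not_mem_noStar y)
  | saddle_split x y z D h =>
    have e1 : delStar (((x ++ z) : Comp) :: y :: D)
        = (noStar x ++ noStar z) :: noStar y :: delStar D := by simp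
    have e2 : delStar (((x ++ y ++ z) : Comp) :: D)
        = (noStar x ++ noStar y ++ noStar z) :: delStar D := by simp
    rw [e1, e2]
    exact LStep.saddle_split (noStar x) (noStar y) (noStar z) (delStar D)
      (star_not_mem_noStar y)
  | birth E => exact LStep.birth _
  | death E => exact LStep.death _

/-! ### Appending a crossingless `star` circle -/

lemma ids_addStar (D : VLD) : ids (D ++ [[Sym.star]]) = ids D := by
  simp [ids]

lemma relabel_addStar (f : ℕ → ℕ) (D : VLD) :
    relabel f (D ++ [[Sym.star]]) = relabel f D ++ [[Sym.star]] := by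
  simp [relabel]

lemma addStar_rmove {D D' : VLD} (h : RMove D D') :
    RMove (D ++ [[Sym.star]]) (D' ++ [[Sym.star]]) := by
  cases h with
  | perm h => exact RMove.perm (h.append_right _)
  | rot a w E h => exact RMove.rot a w (E ++ [[Sym.star]]) h
  | relabel f hf E =>
    rw [← relabel_addStar]
    exact RMove.relabel f hf _
  | r1 c b b' s hb x y E hfresh =>
    refine RMove.r1 c b b' s hb x y (E ++ [[Sym.star]]) ?_
    have e : ids ((x ++ y) :: (E ++ [[Sym.star]])) = ids ((x ++ y) :: E) :=
      ids_addStar ((x ++ y) :: E)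
    rw [e]; exact hfresh
  | r2_same c d b s P hP hcd x y z E hfc hfd =>
    refine RMove.r2_same c d b s P hP hcd x y z (E ++ [[Sym.star]]) ?_ ?_
    · have e : ids ((x ++ y ++ z) :: (E ++ [[Sym.star]])) = ids ((x ++ y ++ z) :: E) :=
        ids_addStar ((x ++ y ++ z) :: E)
      rw [e]; exact hfc
    · have e : ids ((x ++ y ++ z) :: (E ++ [[Sym.star]])) = ids ((x ++ y ++ z) :: E) :=
        ids_addStar ((x ++ y ++ z) :: E)
      rw [e]; exact hfd
  | r2_diff c d b s P hP hcd x y u v E hfc hfd =>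
    refine RMove.r2_diff c d b s P hP hcd x y u v (E ++ [[Sym.star]]) ?_ ?_
    · have e : ids ((x ++ y) :: (u ++ v) :: (E ++ [[Sym.star]]))
          = ids ((x ++ y) :: (u ++ v) :: E) := ids_addStar ((x ++ y) :: (u ++ v) :: E)
      rw [e]; exact hfc
    · have e : ids ((x ++ y) :: (u ++ v) :: (E ++ [[Sym.star]]))
          = ids ((x ++ y) :: (u ++ v) :: E) := ids_addStar ((x ++ y) :: (u ++ v) :: E)
      rw [e]; exact hfd
  | r3_1 a1 a2 b1 b2 c1 c2 h x y z wc E =>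
    exact RMove.r3_1 a1 a2 b1 b2 c1 c2 h x y z wc (E ++ [[Sym.star]])
  | r3_2 a1 a2 b1 b2 c1 c2 h x y z u v E =>
    exact RMove.r3_2 a1 a2 b1 b2 c1 c2 h x y z u v (E ++ [[Sym.star]])
  | r3_3 a1 a2 b1 b2 c1 c2 h x y u v t wc E =>
    exact RMove.r3_3 a1 a2 b1 b2 c1 c2 h x y u v t wc (E ++ [[Sym.star]])

lemma addStar_lstep {l : Lab} {D D' : VLD} (h : LStep l D D') :
    LStep l (D ++ [[Sym.star]]) (D' ++ [[Sym.star]]) := by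
  cases h with
  | rmoveF h => exact LStep.rmoveF (addStar_rmove h)
  | rmoveB h => exact LStep.rmoveB (addStar_rmove h)
  | saddle_merge x y z E h => exact LStep.saddle_merge x y z (E ++ [[Sym.star]]) h
  | saddle_split x y z E h => exact LStep.saddle_split x y z (E ++ [[Sym.star]]) h
  | birth E => exact LStep.birth _
  | death E => exact LStep.death _

/-! ### Movies -/

lemma isMovie_map (g : VLD → VLD)
    (hg : ∀ l (D D' : VLD), LStep l D D' → LStep l (g D) (g D')) :
    ∀ (m : List (Lab × VLD)) (D D' : VLD), IsMovie D m D' →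
      IsMovie (g D) (m.map (fun p => (p.1, g p.2))) (g D') := by
  intro m
  induction m with
  | nil => intro D D' h; exact congrArg g h
  | cons p m ih =>
    intro D D' h
    obtain ⟨hs, hm⟩ := h
    exact ⟨hg _ _ _ hs, ih _ _ hm⟩

lemma countLab_map (g : VLD → VLD) (l : Lab) (m : List (Lab × VLD)) :
    countLab l (m.map (fun p => (p.1, g p.2))) = countLab l m := by
  induction m with
  | nil => rfl
  | cons p m ih =>
    simp only [countLab, List.map_cons, List.filter_cons] at *
    by_cases hp : p.1 == l
    · simp [hp, ih]
    · simp at hp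
      simp [hp, ih]

lemma isMovie_append {D D' D'' : VLD} {m m' : List (Lab × VLD)}
    (h : IsMovie D m D') (h' : IsMovie D' m' D'') : IsMovie D (m ++ m') D'' := by
  induction m generalizing D with
  | nil => cases h; exact h'
  | cons p m ih =>
    obtain ⟨hs, hm⟩ := h
    exact ⟨hs, ih hm⟩

lemma countLab_append (l : Lab) (m m' : List (Lab × VLD)) :
    countLab l (m ++ m') = countLab l m + countLab l m' := by
  simp [countLab, List.filter_append]

lemma countLab_addStarMap (l : Lab) (m : List (Lab × VLD)) :
    countLab l (m.map (fun p => (p.1, p.2 ++ [[Sym.star]]))) = countLab l m :=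
  countLab_map (fun D => D ++ [[Sym.star]]) l m

lemma countLab_nil (l : Lab) : countLab l ([] : List (Lab × VLD)) = 0 := rfl

/-- **Lemma 3.3.** A long virtual knot `K` is virtually slice if and only if its
closure `K̄` is virtually slice. -/
theorem longSlice_iff_closure_slice (w : List Sym) (hwf : WF (longDiagram w))
    (hstar : Sym.star ∉ w) :
    LongSlice w ↔ RoundSlice (closure w) := by
  constructor
  · rintro ⟨m, hm, hc⟩
    refine ⟨m.map (fun p => (p.1, delStar p.2)), ?_, ?_⟩
    · have h := isMovie_map delStar (fun _ _ _ => delStar_lstep) m _ _ hm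
      have e1 : delStar (longDiagram w) = closure w := by
        simp [longDiagram, closure, noStar_eq_self hstar]
      have e2 : delStar (longDiagram []) = [([] : Comp)] := by
        simp [longDiagram]
      rwa [e1, e2] at h
    · rw [countLab_map, countLab_map, countLab_map]; exact hc
  · rintro ⟨m, hm, hc⟩
    have hmov := isMovie_map (fun D => D ++ [[Sym.star]])
      (fun _ _ _ => addStar_lstep) m _ _ hm
    refine ⟨(Lab.saddle, [[Sym.star], w]) :: (Lab.rmove, closure w ++ [[Sym.star]]) ::
      ((m.map (fun p => (p.1, p.2 ++ [[Sym.star]]))) ++ [(Lab.death, longDiagram [])]), ?_, ?_⟩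
    · refine ⟨?_, ?_, ?_⟩
      · have h := LStep.saddle_split [Sym.star] w [] [] hstar
        simpa [longDiagram] using h
      · exact LStep.rmoveF (RMove.perm (List.Perm.swap w [Sym.star] []))
      · refine isMovie_append hmov ⟨?_, rfl⟩
        have h := LStep.death ([[Sym.star]] : VLD)
        simpa [longDiagram] using h
    · have c_ss : ∀ (X : VLD) (mm : List (Lab × VLD)),
          countLab Lab.saddle ((Lab.saddle, X) :: mm) = countLab Lab.saddle mm + 1 :=
        fun _ _ => rfl
      have c_bs : ∀ (X : VLD) (mm : List (Lab × VLD)),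
          countLab Lab.birth ((Lab.saddle, X) :: mm) = countLab Lab.birth mm :=
        fun _ _ => rfl
      have c_ds : ∀ (X : VLD) (mm : List (Lab × VLD)),
          countLab Lab.death ((Lab.saddle, X) :: mm) = countLab Lab.death mm :=
        fun _ _ => rfl
      have c_sr : ∀ (X : VLD) (mm : List (Lab × VLD)),
          countLab Lab.saddle ((Lab.rmove, X) :: mm) = countLab Lab.saddle mm :=
        fun _ _ => rfl
      have c_br : ∀ (X : VLD) (mm : List (Lab × VLD)),
          countLab Lab.birth ((Lab.rmove, X) :: mm) = countLab Lab.birth mm :=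
        fun _ _ => rfl
      have c_dr : ∀ (X : VLD) (mm : List (Lab × VLD)),
          countLab Lab.death ((Lab.rmove, X) :: mm) = countLab Lab.death mm :=
        fun _ _ => rfl
      have c_sd : ∀ (X : VLD) (mm : List (Lab × VLD)),
          countLab Lab.saddle ((Lab.death, X) :: mm) = countLab Lab.saddle mm :=
        fun _ _ => rfl
      have c_bd : ∀ (X : VLD) (mm : List (Lab × VLD)),
          countLab Lab.birth ((Lab.death, X) :: mm) = countLab Lab.birth mm :=
        fun _ _ => rfl
      have c_dd : ∀ (X : VLD) (mm : List (Lab × VLD)),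
          countLab Lab.death ((Lab.death, X) :: mm) = countLab Lab.death mm + 1 :=
        fun _ _ => rfl
      simp only [c_ss, c_bs, c_ds, c_sr, c_br, c_dr, c_sd, c_bd, c_dd,
        countLab_append, countLab_addStarMap, countLab_nil]
      omega

end VKnot
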